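/- Let P > 0 and 0 < N_1 ≤ N_2 ≤ N_3 be reals. Let W = {(R_1,R_2,R_3) ∈ ℝ³ : R_1,R_2,R_3 ≥ 0 and ∃α ∈ [0,1] with R_1 ≤ C(αP/N_1), R_1 + R_3 ≤ C(P/N_1), R_2 ≤ C((1−α)P/(αP+N_2)), R_3 ≤ C(P/N_3)} and S = {(R_1,R_2,R_3) ∈ ℝ³ : R_1,R_2,R_3 ≥ 0 and ∃α ∈ [0,1] with R_1 < C(αP/N_1), R_1 + R_3 < C(P/N_1), R_2 < C((1−α)P/(αP+N_2)), R_3 < C(P/N_3)}. Then W equals the closure of S in ℝ³. -/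
import Mathlib

open Filter Topology

/-- `C q = (1/2) · log(1+q)` (natural logarithm). -/
noncomputable def C (q : ℝ) : ℝ := (1 / 2) * Real.log (1 + q)

lemma C_zero : C 0 = 0 := by simp [C]

lemma C_nonneg {q : ℝ} (h : 0 ≤ q) : 0 ≤ C q :=
  mul_nonneg (by norm_num) (Real.log_nonneg (by linarith))

lemma C_pos {q : ℝ} (h : 0 < q) : 0 < C q :=
  mul_pos (by norm_num) (Real.log_pos (by linarith))

lemma contAt_C {q : ℝ} (h : 0 ≤ q) : ContinuousAt C q := by
  have h1 : ContinuousAt (fun x : ℝ => Real.log (1 + x)) q :=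
    (Real.continuousAt_log (by linarith)).comp (by fun_prop)
  exact h1.const_mul (1 / 2 : ℝ)

lemma tmul_lt {t x B : ℝ} (ht0 : 0 ≤ t) (ht1 : t < 1) (hx : 0 ≤ x) (hxB : x ≤ B)
    (hB : 0 < B) : t * x < B := by nlinarith

lemma contAt_f1 {P N₁ : ℝ} (hP : 0 < P) (hN1 : 0 < N₁) {a : ℝ} (ha : 0 ≤ a) :
    ContinuousAt (fun x : ℝ => C (x * P / N₁)) a := by
  have h1 : ContinuousAt (fun x : ℝ => x * P / N₁) a := by fun_prop
  exact ContinuousAt.comp (f := fun x : ℝ => x * P / N₁) (g := C)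
    (contAt_C (div_nonneg (mul_nonneg ha hP.le) hN1.le)) h1

lemma contAt_f2 {P N₂ : ℝ} (hP : 0 < P) (hN2 : 0 < N₂) {a : ℝ} (ha0 : 0 ≤ a) (ha1 : a ≤ 1) :
    ContinuousAt (fun x : ℝ => C ((1 - x) * P / (x * P + N₂))) a := by
  have hd : a * P + N₂ ≠ 0 := by positivity
  have h1 : ContinuousAt (fun x : ℝ => (1 - x) * P / (x * P + N₂)) a :=
    ContinuousAt.div (by fun_prop) (by fun_prop) hd
  refine ContinuousAt.comp (f := fun x : ℝ => (1 - x) * P / (x * P + N₂)) (g := C) (contAt_C ?_) h1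
  exact div_nonneg (mul_nonneg (by linarith) hP.le) (by positivity)

lemma exists_alpha {P N₁ N₂ : ℝ} (hP : 0 < P) (hN1 : 0 < N₁) (hN2 : 0 < N₂)
    {R₁ R₂ : ℝ} (hR1 : 0 ≤ R₁) (hR2 : 0 ≤ R₂) {α : ℝ} (hα0 : 0 ≤ α) (hα1 : α ≤ 1)
    (h1 : R₁ ≤ C (α * P / N₁)) (h2 : R₂ ≤ C ((1 - α) * P / (α * P + N₂)))
    {t : ℝ} (ht0 : 0 ≤ t) (ht1 : t < 1) :
    ∃ β : ℝ, 0 ≤ β ∧ β ≤ 1 ∧ t * R₁ < C (β * P / N₁) ∧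
      t * R₂ < C ((1 - β) * P / (β * P + N₂)) := by
  rcases lt_or_eq_of_le hα0 with hpos | h0
  · rcases lt_or_eq_of_le hα1 with hlt | heq
    · -- 0 < α < 1 : take β = α
      refine ⟨α, hα0, hα1, ?_, ?_⟩
      · exact tmul_lt ht0 ht1 hR1 h1 (C_pos (div_pos (mul_pos hpos hP) hN1))
      · refine tmul_lt ht0 ht1 hR2 h2 (C_pos (div_pos (mul_pos (by linarith) hP) ?_))
        positivity
    · -- α = 1 : then R₂ = 0
      subst heq
      have hR2' : R₂ = 0 := by
        have : C ((1 - 1) * P / (1 * P + N₂)) = 0 := by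
          rw [show ((1:ℝ) - 1) * P / (1 * P + N₂) = 0 by ring, C_zero]
        linarith [h2, this ▸ h2]
      have hlim : t * R₁ < C (1 * P / N₁) :=
        tmul_lt ht0 ht1 hR1 h1 (C_pos (by positivity))
      have hcont : ContinuousAt (fun x : ℝ => C (x * P / N₁)) 1 :=
        contAt_f1 hP hN1 zero_le_one
      have hev1 : ∀ᶠ a in 𝓝[<] (1:ℝ), t * R₁ < C (a * P / N₁) :=
        (hcont.tendsto.eventually (eventually_gt_nhds hlim)).filter_mono nhdsWithin_le_nhds
      have hev2 : ∀ᶠ a in 𝓝[<] (1:ℝ), 0 < a :=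
        (eventually_gt_nhds (by norm_num : (0:ℝ) < 1)).filter_mono nhdsWithin_le_nhds
      have hev3 : ∀ᶠ a in 𝓝[<] (1:ℝ), a < 1 := eventually_mem_nhdsWithin
      obtain ⟨β, hb1, hb2, hb3⟩ := (hev1.and (hev2.and hev3)).exists
      refine ⟨β, hb2.le, hb3.le, hb1, ?_⟩
      rw [hR2', mul_zero]
      refine C_pos (div_pos (mul_pos (by linarith) hP) ?_)
      have : 0 ≤ β * P := mul_nonneg hb2.le hP.le
      linarith
  · -- α = 0 : then R₁ = 0
    subst h0
    have hR1' : R₁ = 0 := by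
      have h0' : C ((0:ℝ) * P / N₁) = 0 := by
        rw [show (0:ℝ) * P / N₁ = 0 by ring, C_zero]
      linarith [h0' ▸ h1]
    have hlim : t * R₂ < C ((1 - 0) * P / (0 * P + N₂)) := by
      refine tmul_lt ht0 ht1 hR2 h2 (C_pos (div_pos ?_ ?_)) <;> [nlinarith; nlinarith]
    have hcont : ContinuousAt (fun x : ℝ => C ((1 - x) * P / (x * P + N₂))) 0 :=
      contAt_f2 hP hN2 le_rfl zero_le_one
    have hev1 : ∀ᶠ a in 𝓝[>] (0:ℝ), t * R₂ < C ((1 - a) * P / (a * P + N₂)) :=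
      (hcont.tendsto.eventually (eventually_gt_nhds hlim)).filter_mono nhdsWithin_le_nhds
    have hev2 : ∀ᶠ a in 𝓝[>] (0:ℝ), a < 1 :=
      (eventually_lt_nhds (by norm_num : (0:ℝ) < 1)).filter_mono nhdsWithin_le_nhds
    have hev3 : ∀ᶠ a in 𝓝[>] (0:ℝ), 0 < a := eventually_mem_nhdsWithin
    obtain ⟨β, hb1, hb2, hb3⟩ := (hev1.and (hev2.and hev3)).exists
    refine ⟨β, hb3.le, hb2.le, ?_, hb1⟩
    rw [hR1', mul_zero]
    exact C_pos (div_pos (mul_pos hb3 hP) hN1)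

/-- For the members `G₁₇ ∪ G₂₂` and `G₁₇ ∪ G₂₅` of group 7, the intersection of the
proposed outer bounds equals the closure of the proposed inner bound, establishing
the capacity. -/
theorem group7_capacity_22_25 (P N₁ N₂ N₃ : ℝ)
    (hP : 0 < P) (hN1 : 0 < N₁) (hN12 : N₁ ≤ N₂) (hN23 : N₂ ≤ N₃) :
    {r : ℝ × ℝ × ℝ | 0 ≤ r.1 ∧ 0 ≤ r.2.1 ∧ 0 ≤ r.2.2 ∧ ∃ α : ℝ, 0 ≤ α ∧ α ≤ 1 ∧
        r.1 ≤ C (α * P / N₁) ∧ r.1 + r.2.2 ≤ C (P / N₁) ∧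
        r.2.1 ≤ C ((1 - α) * P / (α * P + N₂)) ∧ r.2.2 ≤ C (P / N₃)} =
    closure {r : ℝ × ℝ × ℝ | 0 ≤ r.1 ∧ 0 ≤ r.2.1 ∧ 0 ≤ r.2.2 ∧
        ∃ α : ℝ, 0 ≤ α ∧ α ≤ 1 ∧
        r.1 < C (α * P / N₁) ∧ r.1 + r.2.2 < C (P / N₁) ∧
        r.2.1 < C ((1 - α) * P / (α * P + N₂)) ∧ r.2.2 < C (P / N₃)} := by
  have hN2 : 0 < N₂ := lt_of_lt_of_le hN1 hN12
  have hN3 : 0 < N₃ := lt_of_lt_of_le hN2 hN23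
  set W := {r : ℝ × ℝ × ℝ | 0 ≤ r.1 ∧ 0 ≤ r.2.1 ∧ 0 ≤ r.2.2 ∧ ∃ α : ℝ, 0 ≤ α ∧ α ≤ 1 ∧
        r.1 ≤ C (α * P / N₁) ∧ r.1 + r.2.2 ≤ C (P / N₁) ∧
        r.2.1 ≤ C ((1 - α) * P / (α * P + N₂)) ∧ r.2.2 ≤ C (P / N₃)} with hWdef
  set S := {r : ℝ × ℝ × ℝ | 0 ≤ r.1 ∧ 0 ≤ r.2.1 ∧ 0 ≤ r.2.2 ∧
        ∃ α : ℝ, 0 ≤ α ∧ α ≤ 1 ∧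
        r.1 < C (α * P / N₁) ∧ r.1 + r.2.2 < C (P / N₁) ∧
        r.2.1 < C ((1 - α) * P / (α * P + N₂)) ∧ r.2.2 < C (P / N₃)} with hSdef
  have hSW : S ⊆ W := by
    rintro r ⟨h1, h2, h3, α, ha0, ha1, c1, c2, c3, c4⟩
    exact ⟨h1, h2, h3, α, ha0, ha1, c1.le, c2.le, c3.le, c4.le⟩
  have hWclosed : IsClosed W := by
    apply IsSeqClosed.isClosed
    intro x r hx hlim
    have l1 : Filter.Tendsto (fun n => (x n).1) atTop (𝓝 r.1) :=
      (continuous_fst.tendsto r).comp hlim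
    have l2 : Filter.Tendsto (fun n => (x n).2.1) atTop (𝓝 r.2.1) :=
      ((continuous_fst.comp continuous_snd).tendsto r).comp hlim
    have l3 : Filter.Tendsto (fun n => (x n).2.2) atTop (𝓝 r.2.2) :=
      ((continuous_snd.comp continuous_snd).tendsto r).comp hlim
    have hn1 : 0 ≤ r.1 :=
      le_of_tendsto_of_tendsto' tendsto_const_nhds l1 fun n => (hx n).1
    have hn2 : 0 ≤ r.2.1 :=
      le_of_tendsto_of_tendsto' tendsto_const_nhds l2 fun n => (hx n).2.1
    have hn3 : 0 ≤ r.2.2 :=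
      le_of_tendsto_of_tendsto' tendsto_const_nhds l3 fun n => (hx n).2.2.1
    choose α ha0 ha1 c1 c2 c3 c4 using fun n => (hx n).2.2.2
    obtain ⟨β, hβ, φ, hφ, hαφ⟩ :=
      isCompact_Icc.tendsto_subseq (x := α) (fun n => Set.mem_Icc.2 ⟨ha0 n, ha1 n⟩)
    obtain ⟨hβ0, hβ1⟩ := Set.mem_Icc.1 hβ
    refine ⟨hn1, hn2, hn3, β, hβ0, hβ1, ?_, ?_, ?_, ?_⟩
    · have hrhs : Filter.Tendsto (fun n => C (α (φ n) * P / N₁)) atTop (𝓝 (C (β * P / N₁))) :=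
        ((contAt_f1 hP hN1 hβ0).tendsto).comp hαφ
      exact le_of_tendsto_of_tendsto' (l1.comp hφ.tendsto_atTop) hrhs fun n => c1 (φ n)
    · exact le_of_tendsto (l1.add l3) (Filter.Eventually.of_forall c2)
    · have harg : Filter.Tendsto (fun n => (1 - α (φ n)) * P / (α (φ n) * P + N₂)) atTop
          (𝓝 ((1 - β) * P / (β * P + N₂))) := by
        apply Filter.Tendsto.div
        · exact (tendsto_const_nhds.sub hαφ).mul_const P
        · exact (hαφ.mul_const P).add tendsto_const_nhds
        · have : 0 ≤ β * P := mul_nonneg hβ0 hP.le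
          positivity
      have hrhs : Filter.Tendsto (fun n => C ((1 - α (φ n)) * P / (α (φ n) * P + N₂))) atTop
          (𝓝 (C ((1 - β) * P / (β * P + N₂)))) :=
        ((contAt_f2 hP hN2 hβ0 hβ1).tendsto).comp hαφ
      exact le_of_tendsto_of_tendsto' (l2.comp hφ.tendsto_atTop) hrhs fun n => c3 (φ n)
    · exact le_of_tendsto l3 (Filter.Eventually.of_forall c4)
  refine Set.Subset.antisymm ?_ (closure_minimal hSW hWclosed)
  -- W ⊆ closure S
  rintro r ⟨hr1, hr2, hr3, α, hα0, hα1, hb1, hb2, hb3, hb4⟩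
  set t : ℕ → ℝ := fun n => 1 - 1 / (n + 1) with htdef
  have ht0 : ∀ n, 0 ≤ t n := by
    intro n
    have h1 : (1:ℝ) / (n + 1) ≤ 1 := by
      rw [div_le_one (by positivity)]
      linarith [Nat.cast_nonneg (α := ℝ) n]
    simp only [htdef]; linarith
  have ht1 : ∀ n, t n < 1 := by
    intro n
    have : (0:ℝ) < 1 / (n + 1) := by positivity
    simp only [htdef]; linarith
  set p : ℕ → ℝ × ℝ × ℝ := fun n => (t n * r.1, t n * r.2.1, t n * r.2.2) with hpdef
  have hmem : ∀ n, p n ∈ S := by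
    intro n
    obtain ⟨β, hβ0, hβ1, hs1, hs2⟩ :=
      exists_alpha hP hN1 hN2 hr1 hr2 hα0 hα1 hb1 hb3 (ht0 n) (ht1 n)
    refine ⟨mul_nonneg (ht0 n) hr1, mul_nonneg (ht0 n) hr2, mul_nonneg (ht0 n) hr3,
      β, hβ0, hβ1, hs1, ?_, hs2, ?_⟩
    · have : t n * r.1 + t n * r.2.2 = t n * (r.1 + r.2.2) := by ring
      rw [this]
      exact tmul_lt (ht0 n) (ht1 n) (by linarith) hb2 (C_pos (div_pos hP hN1))
    · exact tmul_lt (ht0 n) (ht1 n) hr3 hb4 (C_pos (div_pos hP hN3))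
  have htt : Filter.Tendsto t atTop (𝓝 1) := by
    have h0 : Filter.Tendsto (fun n : ℕ => 1 / ((n : ℝ) + 1)) atTop (𝓝 0) :=
      tendsto_one_div_add_atTop_nhds_zero_nat
    have h := h0.const_sub (1:ℝ)
    rw [sub_zero] at h
    exact h
  have hpt : Filter.Tendsto p atTop (𝓝 r) := by
    have h1 : Filter.Tendsto (fun n => t n * r.1) atTop (𝓝 r.1) := by
      have h := htt.mul_const r.1; rwa [one_mul] at h
    have h2 : Filter.Tendsto (fun n => t n * r.2.1) atTop (𝓝 r.2.1) := by
      have h := htt.mul_const r.2.1; rwa [one_mul] at h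
    have h3 : Filter.Tendsto (fun n => t n * r.2.2) atTop (𝓝 r.2.2) := by
      have h := htt.mul_const r.2.2; rwa [one_mul] at h
    have : r = (r.1, r.2.1, r.2.2) := by simp
    rw [this]
    exact h1.prodMk_nhds (h2.prodMk_nhds h3)
  exact mem_closure_of_tendsto hpt (Filter.Eventually.of_forall hmem)
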